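/- Let N > 2 be an integer. (a) If 1 < p < N, there exists k₃ < (N-p)/(1-p) such that for every k ≤ k₃ there is no differentiable function H : [0, π/2] → ℝ with H(0) = 0 satisfying the H-equation on (0, π/2); that is, every solution starting from H(0) = 0 blows up to -∞ at some point x_k ≤ π/2. (b) If p ≥ N, there exists k₄ < 0 with the same conclusion for every k ≤ k₄. -/

import Mathlib

noncomputable section
open Real Set Filter Topology

/-- `H` satisfies the first-order H-equation (for parameters `p`, `N`, `k`) on the set `I`:
`((p-1)H² + k²)H' = (1-p)(H² + k²)² + (H² + k²)(k(p-N) + (2-N)·H·cot x)`. -/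
def HEqOn (p : ℝ) (N : ℕ) (k : ℝ) (H : ℝ → ℝ) (I : Set ℝ) : Prop :=
  ∀ x ∈ I,
    ((p - 1) * (H x) ^ 2 + k ^ 2) * deriv H x =
      (1 - p) * ((H x) ^ 2 + k ^ 2) ^ 2
        + ((H x) ^ 2 + k ^ 2) * (k * (p - (N : ℝ)) + (2 - (N : ℝ)) * H x * Real.cot x)

set_option maxHeartbeats 1000000 in
lemma no_sol (N : ℕ) (hN : 2 < N) (p k : ℝ) (hp : 1 < p) (hk0 : k < 0)
    (h2 : k * (p - (N : ℝ)) + ((N : ℝ) - 2) ^ 2 / (2 * (p - 1)) ≤ (p - 1) * k ^ 2 / 2)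
    (h3 : 16 * max (p - 1) 1 ≤ (p - 1) * (-k)) :
    ¬ ∃ H : ℝ → ℝ, DifferentiableOn ℝ H (Icc 0 (π / 2)) ∧ H 0 = 0 ∧
      HEqOn p N k H (Ioo 0 (π / 2)) := by
  rintro ⟨H, hdiff, -, heq⟩
  have hπ := pi_pos
  have hab : π / 4 < 3 * π / 8 := by linarith
  have hsub : Icc (π / 4) (3 * π / 8) ⊆ Ioo 0 (π / 2) := by
    intro x hx
    exact ⟨by linarith [hx.1], by linarith [hx.2]⟩
  have hkne : k ≠ 0 := ne_of_lt hk0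
  have hk2 : (0 : ℝ) < k ^ 2 := by positivity
  have hderiv : ∀ x ∈ Ioo 0 (π / 2),
      HasDerivAt (fun y => arctan (H y / (-k)))
        (1 / (1 + (H x / (-k)) ^ 2) * (deriv H x / (-k))) x := by
    intro x hx
    have hmem : Icc 0 (π / 2) ∈ 𝓝 x :=
      mem_nhds_iff.2 ⟨Ioo 0 (π / 2), Ioo_subset_Icc_self, isOpen_Ioo, hx⟩
    have hH : HasDerivAt H (deriv H x) x :=
      ((hdiff x (Ioo_subset_Icc_self hx)).differentiableAt hmem).hasDerivAt
    exact (hH.div_const (-k)).arctan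
  have hbound : ∀ x ∈ Icc (π / 4) (3 * π / 8),
      1 / (1 + (H x / (-k)) ^ 2) * (deriv H x / (-k)) ≤ -8 := by
    intro x hx
    have hxI : x ∈ Ioo 0 (π / 2) := hsub hx
    have heqx := heq x hxI
    set h : ℝ := H x with hh
    set h' : ℝ := deriv H x with hh'
    set ct : ℝ := Real.cot x with hct
    set C : ℝ := max (p - 1) 1 with hCdef
    have hCpos : (0 : ℝ) < C := lt_of_lt_of_le one_pos (le_max_right _ _)
    have hw : (0 : ℝ) < h ^ 2 + k ^ 2 := by nlinarith [sq_nonneg h]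
    have hden : (0 : ℝ) < (p - 1) * h ^ 2 + k ^ 2 := by nlinarith [sq_nonneg h]
    have hsin : 0 < Real.sin x := sin_pos_of_pos_of_lt_pi hxI.1 (by linarith [hxI.2])
    have hcos0 : 0 ≤ Real.cos x := cos_nonneg_of_mem_Icc ⟨by linarith [hxI.1], le_of_lt hxI.2⟩
    have hcot0 : 0 ≤ ct := by
      rw [hct, Real.cot_eq_cos_div_sin]; exact div_nonneg hcos0 hsin.le
    have hcot1 : ct ≤ 1 := by
      rw [hct, Real.cot_eq_cos_div_sin, div_le_one hsin]
      have h1 : Real.cos x ≤ Real.cos (π / 4) :=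
        cos_le_cos_of_nonneg_of_le_pi (by linarith) (by linarith [hx.2]) hx.1
      have h2' : Real.sin (π / 4) ≤ Real.sin x :=
        sin_le_sin_of_le_of_le_pi_div_two (by linarith) (by linarith [hx.2]) hx.1
      rw [Real.cos_pi_div_four] at h1
      rw [Real.sin_pi_div_four] at h2'
      linarith
    have hNR : (3 : ℝ) ≤ (N : ℝ) := by exact_mod_cast hN
    have hc2 : ct ^ 2 ≤ 1 := by nlinarith
    -- AM-GM bound for the cot term
    have hq : (0 : ℝ) < 2 * (p - 1) := by linarith
    have hkey : (2 - (N : ℝ)) * h * ct ≤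
        (p - 1) * h ^ 2 / 2 + ((N : ℝ) - 2) ^ 2 / (2 * (p - 1)) := by
      rw [← mul_le_mul_iff_right₀ hq]
      have expand : 2 * (p - 1) * ((p - 1) * h ^ 2 / 2 + ((N : ℝ) - 2) ^ 2 / (2 * (p - 1)))
          = (p - 1) ^ 2 * h ^ 2 + ((N : ℝ) - 2) ^ 2 := by
        field_simp [ne_of_gt (by linarith : (0 : ℝ) < p - 1)]
      rw [expand]
      nlinarith [sq_nonneg ((p - 1) * h + ((N : ℝ) - 2) * ct),
        mul_le_mul_of_nonneg_left hc2 (sq_nonneg ((N : ℝ) - 2))]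
    have hB : k * (p - (N : ℝ)) + (2 - (N : ℝ)) * h * ct ≤
        (p - 1) * (h ^ 2 + k ^ 2) / 2 := by linarith
    have hnum : ((p - 1) * h ^ 2 + k ^ 2) * h' ≤
        -((p - 1) / 2) * (h ^ 2 + k ^ 2) ^ 2 := by
      rw [heqx]
      nlinarith [mul_le_mul_of_nonneg_left hB hw.le]
    have hC : (p - 1) * h ^ 2 + k ^ 2 ≤ C * (h ^ 2 + k ^ 2) := by
      have h1 : p - 1 ≤ C := le_max_left _ _
      have h2' : (1 : ℝ) ≤ C := le_max_right _ _
      nlinarith [sq_nonneg h]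
    have e1 : (-k) * (((p - 1) * h ^ 2 + k ^ 2) * h') ≤
        (-k) * (-((p - 1) / 2) * (h ^ 2 + k ^ 2) ^ 2) :=
      mul_le_mul_of_nonneg_left hnum (by linarith)
    have e2 : (-k) * (-((p - 1) / 2) * (h ^ 2 + k ^ 2) ^ 2) ≤
        ((p - 1) * h ^ 2 + k ^ 2) * (-8 * (h ^ 2 + k ^ 2)) := by
      nlinarith [mul_le_mul_of_nonneg_right hC (by positivity : (0:ℝ) ≤ 8 * (h ^ 2 + k ^ 2)),
        mul_le_mul_of_nonneg_right h3 (by positivity : (0:ℝ) ≤ (h ^ 2 + k ^ 2) ^ 2 / 2)]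
    have hstep : (-k) * h' ≤ -8 * (h ^ 2 + k ^ 2) := by
      have hmul : ((p - 1) * h ^ 2 + k ^ 2) * ((-k) * h') ≤
          ((p - 1) * h ^ 2 + k ^ 2) * (-8 * (h ^ 2 + k ^ 2)) := by
        calc ((p - 1) * h ^ 2 + k ^ 2) * ((-k) * h')
            = (-k) * (((p - 1) * h ^ 2 + k ^ 2) * h') := by ring
          _ ≤ (-k) * (-((p - 1) / 2) * (h ^ 2 + k ^ 2) ^ 2) := e1
          _ ≤ _ := e2
      exact le_of_mul_le_mul_left hmul hden
    have hd : 1 / (1 + (h / (-k)) ^ 2) * (h' / (-k)) =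
        ((-k) * h') / (h ^ 2 + k ^ 2) := by
      field_simp
      ring
    rw [hd, div_le_iff₀ hw]
    linarith
  have hcont : ContinuousOn (fun y => arctan (H y / (-k))) (Icc (π / 4) (3 * π / 8)) := by
    apply Real.continuous_arctan.comp_continuousOn
    exact (hdiff.continuousOn.mono (fun x hx => Ioo_subset_Icc_self (hsub hx))).div_const _
  obtain ⟨c, hc, hslope⟩ := exists_hasDerivAt_eq_slope (fun y => arctan (H y / (-k)))
    (fun x => 1 / (1 + (H x / (-k)) ^ 2) * (deriv H x / (-k))) hab hcont
    (fun x hx => hderiv x (hsub (Ioo_subset_Icc_self hx)))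
  have h8 : 1 / (1 + (H c / (-k)) ^ 2) * (deriv H c / (-k)) ≤ -8 :=
    hbound c (Ioo_subset_Icc_self hc)
  have hgap : arctan (H (3 * π / 8) / (-k)) - arctan (H (π / 4) / (-k)) ≤ -π := by
    have hba : (0 : ℝ) < 3 * π / 8 - π / 4 := by linarith
    rw [eq_div_iff (ne_of_gt hba)] at hslope
    nlinarith
  have hlow := Real.neg_pi_div_two_lt_arctan (H (3 * π / 8) / (-k))
  have hhigh := Real.arctan_lt_pi_div_two (H (π / 4) / (-k))
  linarith

/-- The shooting sets are bounded below: for `k` sufficiently negative, no solution of the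
H-equation with `H(0) = 0` can exist (as a differentiable function) on all of `[0, π/2]`. -/
theorem shooting_set_bounded_below (N : ℕ) (hN : 2 < N) (p : ℝ) (hp : 1 < p) :
    (p < (N : ℝ) → ∃ k₃ < ((N : ℝ) - p) / (1 - p),
      ∀ k ≤ k₃,
        ¬ ∃ H : ℝ → ℝ,
            DifferentiableOn ℝ H (Icc 0 (π / 2)) ∧
            H 0 = 0 ∧
            HEqOn p N k H (Ioo 0 (π / 2))) ∧
    ((N : ℝ) ≤ p → ∃ k₄ < (0 : ℝ),
      ∀ k ≤ k₄,
        ¬ ∃ H : ℝ → ℝ,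
            DifferentiableOn ℝ H (Icc 0 (π / 2)) ∧
            H 0 = 0 ∧
            HEqOn p N k H (Ioo 0 (π / 2))) := by
  have hp1 : (0 : ℝ) < p - 1 := by linarith
  have hD0 : (0 : ℝ) ≤ ((N : ℝ) - 2) ^ 2 / (2 * (p - 1)) := by positivity
  have hC0 : (0 : ℝ) < max (p - 1) 1 := lt_of_lt_of_le one_pos (le_max_right _ _)
  have hA0 : (0 : ℝ) ≤ 2 * (|(N : ℝ) - p| + ((N : ℝ) - 2) ^ 2 / (2 * (p - 1))) / (p - 1) := by
    positivity
  have hB0 : (0 : ℝ) ≤ 16 * max (p - 1) 1 / (p - 1) := by positivity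
  set K : ℝ := -(2 * (|(N : ℝ) - p| + ((N : ℝ) - 2) ^ 2 / (2 * (p - 1))) / (p - 1) + 1
      + 16 * max (p - 1) 1 / (p - 1)) with hK
  have hmain : ∀ k ≤ K,
      ¬ ∃ H : ℝ → ℝ, DifferentiableOn ℝ H (Icc 0 (π / 2)) ∧ H 0 = 0 ∧
        HEqOn p N k H (Ioo 0 (π / 2)) := by
    intro k hk
    have ht : 2 * (|(N : ℝ) - p| + ((N : ℝ) - 2) ^ 2 / (2 * (p - 1))) / (p - 1) + 1
        + 16 * max (p - 1) 1 / (p - 1) ≤ -k := by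
      rw [hK] at hk; linarith
    have ht1 : (1 : ℝ) ≤ -k := by linarith
    have ht2 : 2 * (|(N : ℝ) - p| + ((N : ℝ) - 2) ^ 2 / (2 * (p - 1))) ≤ (p - 1) * (-k) := by
      have := (div_le_iff₀ hp1).mp (show
        2 * (|(N : ℝ) - p| + ((N : ℝ) - 2) ^ 2 / (2 * (p - 1))) / (p - 1) ≤ -k by linarith)
      linarith
    have ht3 : 16 * max (p - 1) 1 ≤ (p - 1) * (-k) := by
      have := (div_le_iff₀ hp1).mp (show 16 * max (p - 1) 1 / (p - 1) ≤ -k by linarith)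
      linarith
    have hk0 : k < 0 := by linarith
    refine no_sol N hN p k hp hk0 ?_ ht3
    have habs : (N : ℝ) - p ≤ |(N : ℝ) - p| := le_abs_self _
    have habs0 : (0 : ℝ) ≤ |(N : ℝ) - p| := abs_nonneg _
    nlinarith [mul_le_mul_of_nonneg_right ht2 (by linarith : (0 : ℝ) ≤ -k),
      mul_le_mul_of_nonneg_left ht1 hD0,
      mul_le_mul_of_nonneg_right habs (by linarith : (0 : ℝ) ≤ -k)]
  constructor
  · intro hpN
    refine ⟨K, ?_, hmain⟩
    have habs : |(N : ℝ) - p| = (N : ℝ) - p := abs_of_pos (by linarith)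
    have hdiv : ((N : ℝ) - p) / (1 - p) = -(((N : ℝ) - p) / (p - 1)) := by
      rw [show (1 - p) = -(p - 1) by ring, div_neg]
    rw [hdiv]
    have h4 : ((N : ℝ) - p) / (p - 1) ≤
        2 * (|(N : ℝ) - p| + ((N : ℝ) - 2) ^ 2 / (2 * (p - 1))) / (p - 1) := by
      gcongr
      rw [habs]
      linarith
    rw [hK]
    linarith
  · intro _
    refine ⟨K, ?_, hmain⟩
    rw [hK]
    linarith
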